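/- Let G' be a k-spanner (with respect to lengths 1/w_e) of the associated multi-graph G of an undirected hypergraph H = (V,F,z), where each edge e of G arises from replacing a hyperedge f_e ∈ F by its clique C(f_e) and has weight w_e = z_{f_e}. Then S = {f_e : e ∈ G'} is a k-hyperspanner of H: for every f ∈ F and every pair {u,v} ⊆ f with u ≠ v, there is a u–v hyperpath P ⊆ S with ∑_{f'∈P} 1/z_{f'} ≤ k/z_f. -/

import Mathlib

open Finset

/-- `IsHyperpath ed u v L` means: the list of hyperedges `L = [f₁, …, f_ℓ]` (with vertex sets
given by `ed`) is a `u`–`v` hyperpath, i.e. `ℓ ≥ 1`, `u ∈ f₁`, `v ∈ f_ℓ`, and consecutive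
hyperedges intersect. -/
def IsHyperpath {V α : Type*} (ed : α → Finset V) : V → V → List α → Prop
  | _, _, [] => False
  | u, v, [f] => u ∈ ed f ∧ v ∈ ed f
  | u, v, f :: g :: L => u ∈ ed f ∧ ∃ w ∈ ed f, IsHyperpath ed w v (g :: L)

/-- If `T` is a `k`-spanner (w.r.t. lengths `1/w_e`) of the associated multigraph of an
undirected hypergraph `H = (V,F,z)` — where each edge `e` comes from a hyperedge `forig e`,
has its two endpoints inside `ed (forig e)`, weight `z (forig e)`, and every pair inside
every hyperedge is present — then `S = {f_e : e ∈ T}` is a `k`-hyperspanner of `H`: for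
every `f ∈ F` and distinct `u, v ∈ f` there is a `u`–`v` hyperpath `P ⊆ S`
with `∑_{f'∈P} 1/z_{f'} ≤ k/z_f`. -/

lemma map_hyperpath {V α β : Type*} (ed : α → Finset V) (ep : β → Finset V)
    (forig : β → α) :
    ∀ (L : List β) (u v : V), (∀ e ∈ L, ep e ⊆ ed (forig e)) →
      IsHyperpath ep u v L → IsHyperpath ed u v (L.map forig)
  | [], _, _, _, h => h.elim
  | [f], u, v, hsub, ⟨hu, hv⟩ =>
      ⟨hsub f (List.mem_singleton_self f) hu, hsub f (List.mem_singleton_self f) hv⟩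
  | f :: g :: L, u, v, hsub, ⟨hu, w, hw, hrest⟩ =>
      ⟨hsub f List.mem_cons_self hu, w, hsub f List.mem_cons_self hw,
        map_hyperpath ed ep forig (g :: L) w v
          (fun e he => hsub e (List.mem_cons_of_mem _ he)) hrest⟩

theorem stmt10 {V α β : Type*} [DecidableEq V] [DecidableEq α]
    (F : Finset α) (ed : α → Finset V) (z : α → ℝ) (hz : ∀ f ∈ F, 0 < z f)
    (E : Finset β) (ep : β → Finset V) (forig : β → α)
    (hE : ∀ e ∈ E, forig e ∈ F ∧ ep e ⊆ ed (forig e) ∧ (ep e).card = 2)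
    (hfull : ∀ f ∈ F, ∀ u ∈ ed f, ∀ v ∈ ed f, u ≠ v →
      ∃ e ∈ E, ep e = {u, v} ∧ forig e = f)
    (k : ℝ) (hk : 1 ≤ k)
    (T : Finset β) (hT : T ⊆ E)
    (hspanner : ∀ e ∈ E, ∀ u ∈ ep e, ∀ v ∈ ep e, u ≠ v →
      ∃ L : List β, (∀ e' ∈ L, e' ∈ T) ∧ IsHyperpath ep u v L ∧
        (L.map fun e' => 1 / z (forig e')).sum ≤ k / z (forig e)) :
    ∀ f ∈ F, ∀ u ∈ ed f, ∀ v ∈ ed f, u ≠ v →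
      ∃ L : List α, (∀ g ∈ L, g ∈ T.image forig) ∧ IsHyperpath ed u v L ∧
        (L.map fun g => 1 / z g).sum ≤ k / z f := by
  intro f hf u hu v hv huv
  obtain ⟨e, heE, hepe, hfe⟩ := hfull f hf u hu v hv huv
  have hu' : u ∈ ep e := by rw [hepe]; simp
  have hv' : v ∈ ep e := by rw [hepe]; simp
  obtain ⟨L, hLT, hpath, hsum⟩ := hspanner e heE u hu' v hv' huv
  refine ⟨L.map forig, ?_, ?_, ?_⟩
  · intro g hg
    obtain ⟨e', he', rfl⟩ := List.mem_map.1 hg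
    exact Finset.mem_image_of_mem _ (hLT e' he')
  · exact map_hyperpath ed ep forig L u v
      (fun e' he' => (hE e' (hT (hLT e' he'))).2.1) hpath
  · rw [List.map_map]
    simpa [Function.comp_def, hfe] using hsum
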